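/- Let W1, W2, W3 be three lines in P^3 concurrent through a point w and not coplanar, and let S1, S2, S3 be three lines concurrent through a distinct point s and not coplanar. Then the span of the six Plücker vectors {W1, W2, W3, S1, S2, S3} in R^6 has dimension exactly 5. -/

import Mathlib

set_option maxHeartbeats 1600000


def plucker (p q : Fin 4 → ℝ) : Fin 6 → ℝ :=
  ![p 0 * q 1 - p 1 * q 0, p 0 * q 2 - p 2 * q 0, p 0 * q 3 - p 3 * q 0,
    p 1 * q 2 - p 2 * q 1, p 1 * q 3 - p 3 * q 1, p 2 * q 3 - p 3 * q 2]

lemma vec6_five {α : Type*} (a b c d e f : α) : (![a,b,c,d,e,f]) (5 : Fin 6) = f := rfl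

lemma plucker_eq_zero_imp {w q : Fin 4 → ℝ} (hw : w ≠ 0) (h : plucker w q = 0) :
    ∃ c : ℝ, q = c • w := by
  have hi : w 0 ≠ 0 ∨ w 1 ≠ 0 ∨ w 2 ≠ 0 ∨ w 3 ≠ 0 := by
    by_contra h'; push_neg at h'
    exact hw (funext fun i => by fin_cases i <;> simp [h'.1, h'.2.1, h'.2.2.1, h'.2.2.2])
  have h0 := congrFun h 0
  have h1 := congrFun h 1
  have h2 := congrFun h 2
  have h3 := congrFun h 3
  have h4 := congrFun h 4
  have h5 := congrFun h 5
  simp [plucker, vec6_five] at h0 h1 h2 h3 h4 h5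
  rcases hi with hwi | hwi | hwi | hwi
  · refine ⟨q 0 / w 0, funext fun j => ?_⟩
    fin_cases j <;> simp [vec6_five] <;> field_simp <;>
    first
      | ring1
      | linear_combination h0 | linear_combination -h0
      | linear_combination h1 | linear_combination -h1
      | linear_combination h2 | linear_combination -h2
      | linear_combination h3 | linear_combination -h3
      | linear_combination h4 | linear_combination -h4
      | linear_combination h5 | linear_combination -h5
  · refine ⟨q 1 / w 1, funext fun j => ?_⟩
    fin_cases j <;> simp [vec6_five] <;> field_simp <;>
    first
      | ring1
      | linear_combination h0 | linear_combination -h0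
      | linear_combination h1 | linear_combination -h1
      | linear_combination h2 | linear_combination -h2
      | linear_combination h3 | linear_combination -h3
      | linear_combination h4 | linear_combination -h4
      | linear_combination h5 | linear_combination -h5
  · refine ⟨q 2 / w 2, funext fun j => ?_⟩
    fin_cases j <;> simp [vec6_five] <;> field_simp <;>
    first
      | ring1
      | linear_combination h0 | linear_combination -h0
      | linear_combination h1 | linear_combination -h1
      | linear_combination h2 | linear_combination -h2
      | linear_combination h3 | linear_combination -h3
      | linear_combination h4 | linear_combination -h4
      | linear_combination h5 | linear_combination -h5
  · refine ⟨q 3 / w 3, funext fun j => ?_⟩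
    fin_cases j <;> simp [vec6_five] <;> field_simp <;>
    first
      | ring1
      | linear_combination h0 | linear_combination -h0
      | linear_combination h1 | linear_combination -h1
      | linear_combination h2 | linear_combination -h2
      | linear_combination h3 | linear_combination -h3
      | linear_combination h4 | linear_combination -h4
      | linear_combination h5 | linear_combination -h5

def pcontr (w : Fin 4 → ℝ) (v : Fin 6 → ℝ) : Fin 4 → ℝ :=
  ![w 1 * v 5 - w 2 * v 4 + w 3 * v 3,
    w 0 * v 5 - w 2 * v 2 + w 3 * v 1,
    w 0 * v 4 - w 1 * v 2 + w 3 * v 0,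
    w 0 * v 3 - w 1 * v 1 + w 2 * v 0]

lemma pcontr_plucker_self (w x : Fin 4 → ℝ) : pcontr w (plucker w x) = 0 := by
  funext i; fin_cases i <;> simp [pcontr, plucker, vec6_five] <;> ring

lemma mem_span_pair_of_pcontr {w s y : Fin 4 → ℝ} (hD : plucker w s ≠ 0)
    (hT : pcontr w (plucker s y) = 0) : ∃ α β : ℝ, y = α • w + β • s := by
  have hi : plucker w s 0 ≠ 0 ∨ plucker w s 1 ≠ 0 ∨ plucker w s 2 ≠ 0 ∨
      plucker w s 3 ≠ 0 ∨ plucker w s 4 ≠ 0 ∨ plucker w s 5 ≠ 0 := by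
    by_contra h'; push_neg at h'
    exact hD (funext fun i => by
      fin_cases i <;>
        simp [h'.1, h'.2.1, h'.2.2.1, h'.2.2.2.1, h'.2.2.2.2.1, h'.2.2.2.2.2])
  have h0 := congrFun hT 0
  have h1 := congrFun hT 1
  have h2 := congrFun hT 2
  have h3 := congrFun hT 3
  simp [pcontr, plucker, vec6_five] at h0 h1 h2 h3
  rcases hi with hd | hd | hd | hd | hd | hd <;> simp [plucker, vec6_five] at hd
  -- indices:  0:(0,1)  1:(0,2)  2:(0,3)  3:(1,2)  4:(1,3)  5:(2,3)
  · refine ⟨(y 0 * s 1 - y 1 * s 0) / (w 0 * s 1 - w 1 * s 0),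
      (w 0 * y 1 - w 1 * y 0) / (w 0 * s 1 - w 1 * s 0), funext fun j => ?_⟩
    fin_cases j <;> simp <;> field_simp <;> rw [eq_div_iff (by contrapose! hd; linarith)] <;>
      first
        | ring1
        | linear_combination h0
        | linear_combination -h0
        | linear_combination h1
        | linear_combination -h1
        | linear_combination h2
        | linear_combination -h2
        | linear_combination h3
        | linear_combination -h3
  · refine ⟨(y 0 * s 2 - y 2 * s 0) / (w 0 * s 2 - w 2 * s 0),
      (w 0 * y 2 - w 2 * y 0) / (w 0 * s 2 - w 2 * s 0), funext fun j => ?_⟩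
    fin_cases j <;> simp <;> field_simp <;> rw [eq_div_iff (by contrapose! hd; linarith)] <;>
      first
        | ring1
        | linear_combination h0
        | linear_combination -h0
        | linear_combination h1
        | linear_combination -h1
        | linear_combination h2
        | linear_combination -h2
        | linear_combination h3
        | linear_combination -h3
  · refine ⟨(y 0 * s 3 - y 3 * s 0) / (w 0 * s 3 - w 3 * s 0),
      (w 0 * y 3 - w 3 * y 0) / (w 0 * s 3 - w 3 * s 0), funext fun j => ?_⟩
    fin_cases j <;> simp <;> field_simp <;> rw [eq_div_iff (by contrapose! hd; linarith)] <;>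
      first
        | ring1
        | linear_combination h0
        | linear_combination -h0
        | linear_combination h1
        | linear_combination -h1
        | linear_combination h2
        | linear_combination -h2
        | linear_combination h3
        | linear_combination -h3
  · refine ⟨(y 1 * s 2 - y 2 * s 1) / (w 1 * s 2 - w 2 * s 1),
      (w 1 * y 2 - w 2 * y 1) / (w 1 * s 2 - w 2 * s 1), funext fun j => ?_⟩
    fin_cases j <;> simp <;> field_simp <;> rw [eq_div_iff (by contrapose! hd; linarith)] <;>
      first
        | ring1
        | linear_combination h0
        | linear_combination -h0
        | linear_combination h1
        | linear_combination -h1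
        | linear_combination h2
        | linear_combination -h2
        | linear_combination h3
        | linear_combination -h3
  · refine ⟨(y 1 * s 3 - y 3 * s 1) / (w 1 * s 3 - w 3 * s 1),
      (w 1 * y 3 - w 3 * y 1) / (w 1 * s 3 - w 3 * s 1), funext fun j => ?_⟩
    fin_cases j <;> simp <;> field_simp <;> rw [eq_div_iff (by contrapose! hd; linarith)] <;>
      first
        | ring1
        | linear_combination h0
        | linear_combination -h0
        | linear_combination h1
        | linear_combination -h1
        | linear_combination h2
        | linear_combination -h2
        | linear_combination h3
        | linear_combination -h3
  · refine ⟨(y 2 * s 3 - y 3 * s 2) / (w 2 * s 3 - w 3 * s 2),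
      (w 2 * y 3 - w 3 * y 2) / (w 2 * s 3 - w 3 * s 2), funext fun j => ?_⟩
    fin_cases j <;> simp <;> field_simp <;> rw [eq_div_iff (by contrapose! hd; linarith)] <;>
      first
        | ring1
        | linear_combination h0
        | linear_combination -h0
        | linear_combination h1
        | linear_combination -h1
        | linear_combination h2
        | linear_combination -h2
        | linear_combination h3
        | linear_combination -h3

def pluckerL (w : Fin 4 → ℝ) : (Fin 4 → ℝ) →ₗ[ℝ] (Fin 6 → ℝ) where
  toFun q := plucker w q
  map_add' a b := by
    funext i; fin_cases i <;> simp [plucker, vec6_five] <;> ring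
  map_smul' c a := by
    funext i; fin_cases i <;> simp [plucker, vec6_five] <;> ring

lemma plucker_self (w : Fin 4 → ℝ) : plucker w w = 0 := by
  funext i; fin_cases i <;> simp [plucker, vec6_five] <;> ring

lemma plucker_swap (w s : Fin 4 → ℝ) : plucker s w = -plucker w s := by
  funext i; fin_cases i <;> simp [plucker, vec6_five] <;> ring

lemma plucker_ne_zero {w s : Fin 4 → ℝ} (h : LinearIndependent ℝ ![w, s]) :
    plucker w s ≠ 0 := by
  intro h0
  have hw : w ≠ 0 := by
    have := h.ne_zero 0; simpa using this
  obtain ⟨c, hc⟩ := plucker_eq_zero_imp hw h0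
  rw [LinearIndependent.pair_iff] at h
  have h2 := h c (-1) (by rw [← hc]; match_scalars <;> ring)
  simp at h2

lemma span_plucker_eq_range (w : Fin 4 → ℝ) (q : Fin 3 → (Fin 4 → ℝ))
    (hncop : Submodule.span ℝ {w, q 0, q 1, q 2} = ⊤) :
    Submodule.span ℝ {plucker w (q 0), plucker w (q 1), plucker w (q 2)} =
      LinearMap.range (pluckerL w) := by
  apply le_antisymm
  · rw [Submodule.span_le]
    rintro v hv
    simp only [Set.mem_insert_iff, Set.mem_singleton_iff] at hv
    rcases hv with rfl | rfl | rfl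
    · exact ⟨q 0, rfl⟩
    · exact ⟨q 1, rfl⟩
    · exact ⟨q 2, rfl⟩
  · rw [LinearMap.range_eq_map, ← hncop, Submodule.map_span, Submodule.span_le]
    rintro _ ⟨x, hx, rfl⟩
    simp only [Set.mem_insert_iff, Set.mem_singleton_iff] at hx
    rcases hx with rfl | rfl | rfl | rfl
    · have : pluckerL x x = 0 := plucker_self x
      rw [this]; exact Submodule.zero_mem _
    · exact Submodule.subset_span (Set.mem_insert_iff.mpr (Or.inl rfl))
    · refine Submodule.subset_span ?_
      simp only [Set.mem_insert_iff, Set.mem_singleton_iff]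
      exact Or.inr (Or.inl rfl)
    · refine Submodule.subset_span ?_
      simp only [Set.mem_insert_iff, Set.mem_singleton_iff]
      exact Or.inr (Or.inr rfl)

lemma ker_pluckerL {w : Fin 4 → ℝ} (hw : w ≠ 0) :
    LinearMap.ker (pluckerL w) = Submodule.span ℝ {w} := by
  apply le_antisymm
  · intro x hx
    obtain ⟨c, rfl⟩ := plucker_eq_zero_imp hw (by exact hx)
    exact Submodule.smul_mem _ c (Submodule.mem_span_singleton_self w)
  · rw [Submodule.span_le, Set.singleton_subset_iff]
    exact plucker_self w

lemma finrank_range_pluckerL {w : Fin 4 → ℝ} (hw : w ≠ 0) :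
    Module.finrank ℝ (LinearMap.range (pluckerL w)) = 3 := by
  have h := (pluckerL w).finrank_range_add_finrank_ker
  rw [ker_pluckerL hw, finrank_span_singleton hw] at h
  simp at h
  omega

theorem two_joints_rank_five (w s : Fin 4 → ℝ)
    (qW qS : Fin 3 → (Fin 4 → ℝ))
    (hws : LinearIndependent ℝ ![w, s])
    (hliW : ∀ i, LinearIndependent ℝ ![w, qW i])
    (hliS : ∀ i, LinearIndependent ℝ ![s, qS i])
    (hncopW : Submodule.span ℝ {w, qW 0, qW 1, qW 2} = ⊤)
    (hncopS : Submodule.span ℝ {s, qS 0, qS 1, qS 2} = ⊤) :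
    Module.finrank ℝ (Submodule.span ℝ
      {plucker w (qW 0), plucker w (qW 1), plucker w (qW 2),
       plucker s (qS 0), plucker s (qS 1), plucker s (qS 2)}) = 5 := by
  have hw : w ≠ 0 := by have := hws.ne_zero 0; simpa using this
  have hs : s ≠ 0 := by have := hws.ne_zero 1; simpa using this
  have hDws : plucker w s ≠ 0 := plucker_ne_zero hws
  have hsw : LinearIndependent ℝ ![s, w] := by
    have h2 : ![s, w] = ![w, s] ∘ (Equiv.swap (0 : Fin 2) 1) := by
      funext i; fin_cases i <;> simp
    rw [h2]
    exact hws.comp _ (Equiv.swap (0 : Fin 2) 1).injective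
  have hDsw : plucker s w ≠ 0 := plucker_ne_zero hsw
  set P := Submodule.span ℝ {plucker w (qW 0), plucker w (qW 1), plucker w (qW 2)} with hPdef
  set Q := Submodule.span ℝ {plucker s (qS 0), plucker s (qS 1), plucker s (qS 2)} with hQdef
  have hP : P = LinearMap.range (pluckerL w) := span_plucker_eq_range w qW hncopW
  have hQ : Q = LinearMap.range (pluckerL s) := span_plucker_eq_range s qS hncopS
  have hrP : Module.finrank ℝ P = 3 := by rw [hP]; exact finrank_range_pluckerL hw
  have hrQ : Module.finrank ℝ Q = 3 := by rw [hQ]; exact finrank_range_pluckerL hs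
  have hinf : P ⊓ Q = Submodule.span ℝ {plucker w s} := by
    apply le_antisymm
    · rintro v ⟨hvP, hvQ⟩
      rw [hP] at hvP; rw [hQ] at hvQ
      obtain ⟨x, hx⟩ := hvP
      obtain ⟨y, hy⟩ := hvQ
      have hTy : pcontr w (plucker s y) = 0 := by
        have : plucker s y = plucker w x := by
          rw [show plucker s y = pluckerL s y from rfl, hy, ← hx]; rfl
        rw [this]; exact pcontr_plucker_self w x
      obtain ⟨α, β, rfl⟩ := mem_span_pair_of_pcontr hDws hTy
      have : v = (-α) • plucker w s := by
        rw [← hy]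
        have h1 : pluckerL s (α • w + β • s) = α • plucker s w + β • plucker s s := by
          rw [map_add, map_smul, map_smul]; rfl
        rw [h1, plucker_self, plucker_swap, smul_zero, add_zero, smul_neg, neg_smul]
      rw [this]
      exact Submodule.smul_mem _ _ (Submodule.mem_span_singleton_self _)
    · rw [Submodule.span_le, Set.singleton_subset_iff]
      constructor
      · rw [hP]; exact ⟨s, rfl⟩
      · rw [hQ]
        refine ⟨-w, ?_⟩
        show plucker s (-w) = plucker w s
        rw [show plucker s (-w) = pluckerL s (-w) from rfl, map_neg]
        show -plucker s w = plucker w s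
        rw [plucker_swap, neg_neg]
  have hrInf : Module.finrank ℝ (P ⊓ Q : Submodule ℝ (Fin 6 → ℝ)) = 1 := by
    rw [hinf]; exact finrank_span_singleton hDws
  have hsum := Submodule.finrank_sup_add_finrank_inf_eq P Q
  have hspan : Submodule.span ℝ
      {plucker w (qW 0), plucker w (qW 1), plucker w (qW 2),
       plucker s (qS 0), plucker s (qS 1), plucker s (qS 2)} = P ⊔ Q := by
    rw [hPdef, hQdef, ← Submodule.span_union, Set.insert_union, Set.insert_union,
      Set.singleton_union]
  rw [hspan]
  omega
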